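/- Conflict analysis following the First-UIP scheme, started from a nogood violated at decision level d > 0 in which some literal has decision level d, terminates with a nogood δ containing exactly one literal of decision level d, provided every implied literal has an antecedent all of whose other literals occur earlier in the assignment. -/

import Mathlib

inductive Lit (V : Type) where
  | pos : V → Lit V
  | neg : V → Lit V
deriving DecidableEq

def Lit.compl {V : Type} : Lit V → Lit V
  | .pos v => .neg v
  | .neg v => .pos v

def Lit.var {V : Type} : Lit V → V
  | .pos v => v
  | .neg v => v

variable {V : Type} [DecidableEq V]

/-- `σ` is the literal of `δ` occurring last in the assignment `A`. -/
def IsLast (A : List (Lit V)) (δ : Finset (Lit V)) (σ : Lit V) : Prop :=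
  σ ∈ δ ∧ σ ∈ A ∧ ∀ τ ∈ δ, A.idxOf τ ≤ A.idxOf σ

/-- `ε` is an antecedent of `σ`: `σ̄ ∈ ε` and every other literal of `ε`
occurs in `A` strictly before `σ`. -/
def Antecedent (A : List (Lit V)) (σ : Lit V) (ε : Finset (Lit V)) : Prop :=
  σ.compl ∈ ε ∧ ∀ τ ∈ ε, τ ≠ σ.compl → τ ∈ A ∧ A.idxOf τ < A.idxOf σ

/-- `σ` is an implied (non-decision) literal of `A`: either its decision level
is `0`, or it is not the first literal of its decision level in `A`. -/
def Implied (A : List (Lit V)) (dl : Lit V → ℕ) (σ : Lit V) : Prop :=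
  dl σ = 0 ∨ ∃ τ ∈ A, dl τ = dl σ ∧ A.idxOf τ < A.idxOf σ

/-- One conflict resolution step of the First-UIP scheme: the last literal `σ`
of the current (violated) nogood `δ` is not the unique literal of `δ` at its
decision level, and `δ` is replaced by its resolvent with an antecedent of
`σ`. -/
def Step (A : List (Lit V)) (dl : Lit V → ℕ) (Ante : Lit V → Finset (Lit V) → Prop)
    (δ δ' : Finset (Lit V)) : Prop :=
  ∃ σ ε, IsLast A δ σ ∧ (∀ τ ∈ δ, τ ∈ A) ∧
    (∃ τ ∈ δ, τ ≠ σ ∧ dl τ = dl σ) ∧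
    Ante σ ε ∧ Antecedent A σ ε ∧
    δ' = δ.erase σ ∪ ε.erase σ.compl

/-- First-UIP conflict analysis, started from a nogood `δ₀`
violated at decision level `d > 0` containing some literal of level `d`,
terminates with a nogood containing exactly one literal of level `d`,
provided every implied literal has an antecedent. -/
theorem stmt8 (A : List (Lit V)) (dl : Lit V → ℕ) (d : ℕ) (hd : 0 < d)
    (hnd : (A.map Lit.var).Nodup)
    (hcons : ∀ l ∈ A, l.compl ∉ A)
    (hmono : A.Pairwise (fun a b => dl a ≤ dl b))
    (hmax : ∀ l ∈ A, dl l ≤ d)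
    (Ante : Lit V → Finset (Lit V) → Prop)
    (hante : ∀ σ ∈ A, Implied A dl σ → ∃ ε, Ante σ ε ∧ Antecedent A σ ε)
    (δ₀ : Finset (Lit V))
    (hδ₀A : ∀ τ ∈ δ₀, τ ∈ A)
    (hδ₀d : ∃ σ ∈ δ₀, dl σ = d) :
    ∃ δ : Finset (Lit V),
      Relation.ReflTransGen (Step A dl Ante) δ₀ δ ∧
      (δ.filter (fun τ => dl τ = d)).card = 1 := by
  have hndA : A.Nodup := List.Nodup.of_map _ hnd
  -- index-monotonicity of decision levels
  have hmono' : ∀ τ₁ ∈ A, ∀ τ₂ ∈ A, A.idxOf τ₁ ≤ A.idxOf τ₂ → dl τ₁ ≤ dl τ₂ := by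
    intro τ₁ h₁ τ₂ h₂ hle
    rcases lt_or_eq_of_le hle with hlt | heq
    · have := List.pairwise_iff_get.mp hmono
        ⟨A.idxOf τ₁, List.idxOf_lt_length_iff.2 h₁⟩
        ⟨A.idxOf τ₂, List.idxOf_lt_length_iff.2 h₂⟩ hlt
      simpa [List.idxOf_get] using this
    · rw [(List.idxOf_inj h₁).mp heq]
  have pow_sum : ∀ i : ℕ, ∑ j ∈ Finset.range i, 2 ^ j = 2 ^ i - 1 := by
    intro i
    induction i with
    | zero => simp
    | succ i ih =>
      rw [Finset.sum_range_succ, ih]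
      have : 0 < 2 ^ i := Nat.pow_pos (by norm_num)
      rw [pow_succ]; omega
  have key : ∀ n, ∀ δ : Finset (Lit V), (∑ τ ∈ δ, 2 ^ A.idxOf τ) < n →
      (∀ τ ∈ δ, τ ∈ A) → (∃ σ ∈ δ, dl σ = d) →
      ∃ δ' : Finset (Lit V), Relation.ReflTransGen (Step A dl Ante) δ δ' ∧
        (δ'.filter (fun τ => dl τ = d)).card = 1 := by
    intro n
    induction n with
    | zero => intro δ h; omega
    | succ n ih =>
      intro δ hm hδA hδd
      by_cases hc : (δ.filter (fun τ => dl τ = d)).card = 1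
      · exact ⟨δ, Relation.ReflTransGen.refl, hc⟩
      obtain ⟨σ₀, hσ₀, hσ₀d⟩ := hδd
      have hσ₀f : σ₀ ∈ δ.filter (fun τ => dl τ = d) := Finset.mem_filter.2 ⟨hσ₀, hσ₀d⟩
      have h1lt : 1 < (δ.filter (fun τ => dl τ = d)).card :=
        lt_of_le_of_ne (Finset.card_pos.2 ⟨σ₀, hσ₀f⟩) (Ne.symm hc)
      obtain ⟨a, ha, b, hb, hab⟩ := Finset.one_lt_card.mp h1lt
      obtain ⟨haδ, had⟩ := Finset.mem_filter.mp ha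
      obtain ⟨hbδ, hbd⟩ := Finset.mem_filter.mp hb
      -- choose σ with maximal index
      obtain ⟨σ, hσδ, hσmax⟩ :=
        Finset.exists_max_image δ (fun τ => A.idxOf τ) ⟨σ₀, hσ₀⟩
      have hσA : σ ∈ A := hδA σ hσδ
      have hσd : dl σ = d :=
        le_antisymm (hmax σ hσA)
          (hσ₀d ▸ hmono' σ₀ (hδA σ₀ hσ₀) σ hσA (hσmax σ₀ hσ₀))
      -- another literal of level d
      obtain ⟨τ', hτ'δ, hτ'ne, hτ'd⟩ : ∃ τ' ∈ δ, τ' ≠ σ ∧ dl τ' = d := by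
        by_cases h : a = σ
        · exact ⟨b, hbδ, fun hbs => hab (h.trans hbs.symm), hbd⟩
        · exact ⟨a, haδ, h, had⟩
      have hτ'A : τ' ∈ A := hδA τ' hτ'δ
      have hτ'lt : A.idxOf τ' < A.idxOf σ :=
        lt_of_le_of_ne (hσmax τ' hτ'δ)
          (fun h => hτ'ne ((List.idxOf_inj hτ'A).mp h))
      -- σ is implied
      have himp : Implied A dl σ :=
        Or.inr ⟨τ', hτ'A, hτ'd.trans hσd.symm, hτ'lt⟩
      obtain ⟨ε, hAnte, hant⟩ := hante σ hσA himp
      set δ' := δ.erase σ ∪ ε.erase σ.compl with hδ'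
      have hstep : Step A dl Ante δ δ' :=
        ⟨σ, ε, ⟨hσδ, hσA, hσmax⟩, hδA, ⟨τ', hτ'δ, hτ'ne, hτ'd.trans hσd.symm⟩,
          hAnte, hant, rfl⟩
      -- invariants for δ'
      have hδ'A : ∀ τ ∈ δ', τ ∈ A := by
        intro τ hτ
        rcases Finset.mem_union.mp hτ with h | h
        · exact hδA τ (Finset.mem_of_mem_erase h)
        · exact (hant.2 τ (Finset.mem_of_mem_erase h) (Finset.ne_of_mem_erase h)).1
      have hδ'd : ∃ σ' ∈ δ', dl σ' = d :=
        ⟨τ', Finset.mem_union_left _ (Finset.mem_erase.2 ⟨hτ'ne, hτ'δ⟩), hτ'd⟩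
      -- measure decreases
      have hmeas : (∑ τ ∈ δ', 2 ^ A.idxOf τ) < ∑ τ ∈ δ, 2 ^ A.idxOf τ := by
        have hsum1 : (∑ τ ∈ δ', 2 ^ A.idxOf τ) ≤
            (∑ τ ∈ δ.erase σ, 2 ^ A.idxOf τ) +
            ∑ τ ∈ ε.erase σ.compl, 2 ^ A.idxOf τ := by
          rw [hδ']
          exact le_trans (Nat.le_add_right _ _)
            (le_of_eq (Finset.sum_union_inter (f := fun τ => 2 ^ A.idxOf τ)))
        have hsum2 : (∑ τ ∈ ε.erase σ.compl, 2 ^ A.idxOf τ) ≤ 2 ^ A.idxOf σ - 1 := by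
          have hinj : ∀ x ∈ ε.erase σ.compl, ∀ y ∈ ε.erase σ.compl,
              A.idxOf x = A.idxOf y → x = y := by
            intro x hx y hy h
            exact (List.idxOf_inj
              (hant.2 x (Finset.mem_of_mem_erase hx) (Finset.ne_of_mem_erase hx)).1).mp h
          calc (∑ τ ∈ ε.erase σ.compl, 2 ^ A.idxOf τ)
              = ∑ j ∈ (ε.erase σ.compl).image (fun τ => A.idxOf τ), 2 ^ j :=
                (Finset.sum_image hinj).symm
            _ ≤ ∑ j ∈ Finset.range (A.idxOf σ), 2 ^ j := by
                apply Finset.sum_le_sum_of_subset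
                intro j hj
                obtain ⟨τ, hτ, rfl⟩ := Finset.mem_image.mp hj
                exact Finset.mem_range.2
                  (hant.2 τ (Finset.mem_of_mem_erase hτ) (Finset.ne_of_mem_erase hτ)).2
            _ = 2 ^ A.idxOf σ - 1 := pow_sum _
        have hsplit : (∑ τ ∈ δ.erase σ, 2 ^ A.idxOf τ) + 2 ^ A.idxOf σ =
            ∑ τ ∈ δ, 2 ^ A.idxOf τ := Finset.sum_erase_add _ _ hσδ
        have hp : 0 < 2 ^ A.idxOf σ := Nat.pow_pos (by norm_num)
        omega
      obtain ⟨δ'', hsteps, hcard⟩ := ih δ' (by omega) hδ'A hδ'd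
      exact ⟨δ'', Relation.ReflTransGen.head hstep hsteps, hcard⟩
  exact key ((∑ τ ∈ δ₀, 2 ^ A.idxOf τ) + 1) δ₀ (by omega) hδ₀A hδ₀d
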